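/- For every n ∈ ℕ there exists a constant C = C(n) ≥ 1 with the following property. Let δ > 0, q > 0, and let Q ⊆ ℝⁿ be any set with s-dimensional Hausdorff content H^q_∞(Q) = β > 0. Then there exists a finite δ-separated set P ⊆ Q such that #(P ∩ B(x,r)) ≤ C·(r/δ)^q for all x ∈ ℝⁿ and all r > δ, and #P ≥ C⁻¹·β·δ^{−q}. -/

import Mathlib

open scoped ENNReal NNReal
open MeasureTheory Metric Set

/-- The `d`-dimensional Hausdorff content of a set:
`H^d_∞(A) = inf { ∑ᵢ (diam Uᵢ)^d : A ⊆ ⋃ᵢ Uᵢ }`. -/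
noncomputable def hausdorffContent {X : Type*} [PseudoEMetricSpace X] (d : ℝ) (A : Set X) :
    ℝ≥0∞ :=
  ⨅ (U : ℕ → Set X) (_ : A ⊆ ⋃ i, U i), ∑' i, EMetric.diam (U i) ^ d

lemma hausdorffContent_le_tsum {X : Type*} [PseudoEMetricSpace X] (d : ℝ) (A : Set X)
    (U : ℕ → Set X) (hU : A ⊆ ⋃ i, U i) :
    hausdorffContent d A ≤ ∑' i, EMetric.diam (U i) ^ d :=
  iInf₂_le U hU

lemma hausdorffContent_le_hausdorffMeasure {X : Type*} [EMetricSpace X] [MeasurableSpace X]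
    [BorelSpace X] {d : ℝ} (hd : 0 < d) (A : Set X) :
    hausdorffContent d A ≤ μH[d] A := by
  rw [MeasureTheory.Measure.hausdorffMeasure_apply]
  refine le_iSup₂_of_le 1 one_pos ?_
  refine le_iInf fun t => le_iInf fun ht => le_iInf fun _ => ?_
  refine (hausdorffContent_le_tsum d A t ht).trans_eq (tsum_congr fun n => ?_)
  rcases eq_empty_or_nonempty (t n) with h | h
  · simp [h, ENNReal.zero_rpow_of_pos hd, EMetric.diam]
  · rw [iSup_pos h]; rfl

lemma hausdorffContent_le_sum {X : Type*} [PseudoEMetricSpace X] {ι : Type*} (s : Finset ι)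
    (f : ι → Set X) {d : ℝ} (hd : 0 < d) {A : Set X} (hA : A ⊆ ⋃ b ∈ s, f b) :
    hausdorffContent d A ≤ ∑ b ∈ s, EMetric.diam (f b) ^ d := by
  classical
  set m := s.card with hm
  let e : Fin m ≃ ↥s := (s.equivFin).symm
  let U : ℕ → Set X := fun i => if h : i < m then f (e ⟨i, h⟩) else ∅
  have hcov : A ⊆ ⋃ i, U i := by
    intro z hz
    obtain ⟨b, hb, hzb⟩ := by simpa using hA hz
    refine mem_iUnion.2 ⟨(e.symm ⟨b, hb⟩ : Fin m), ?_⟩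
    simp only [U, dif_pos (e.symm ⟨b, hb⟩).isLt]
    rw [Fin.eta, Equiv.apply_symm_apply]
    exact hzb
  refine (hausdorffContent_le_tsum d A U hcov).trans ?_
  rw [tsum_eq_sum (s := Finset.range m) (fun i hi => by
    have hi' : ¬ i < m := by simpa using hi
    simp only [U, dif_neg hi']
    simp [ENNReal.zero_rpow_of_pos hd, EMetric.diam])]
  rw [← Fin.sum_univ_eq_sum_range (fun i => EMetric.diam (U i) ^ d) m]
  have : ∀ i : Fin m, EMetric.diam (U i) ^ d = EMetric.diam (f (e i)) ^ d := fun i => by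
    simp only [U, dif_pos i.isLt, Fin.eta]
  rw [Finset.sum_congr rfl fun i _ => this i]
  rw [Equiv.sum_comp e (fun b => EMetric.diam (f (b : ι)) ^ d)]
  exact (Finset.sum_coe_sort s fun b => EMetric.diam (f b) ^ d).le

lemma ediam_closedBall_le {E : Type*} [PseudoMetricSpace E] (x : E) (r : ℝ) :
    EMetric.diam (Metric.closedBall x r) ≤ ENNReal.ofReal (2 * r) := by
  refine EMetric.diam_le fun p hp q hq => ?_
  rw [edist_dist]
  refine ENNReal.ofReal_le_ofReal ?_
  calc dist p q ≤ dist p x + dist q x := dist_triangle_right p q x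
  _ ≤ r + r := add_le_add hp hq
  _ = 2 * r := by ring

lemma sum_ncard_le_of_disjoint {ι E : Type*} {P : Set E} (hP : P.Finite) (F : Finset ι)
    (S : ι → Set E) (hsub : ∀ b ∈ F, S b ⊆ P)
    (hdisj : ∀ b₁ ∈ F, ∀ b₂ ∈ F, b₁ ≠ b₂ → Disjoint (S b₁) (S b₂)) :
    ∑ b ∈ F, (S b).ncard ≤ P.ncard := by
  classical
  have key : ∀ F' : Finset ι, (∀ b ∈ F', S b ⊆ P) →
      (∀ b₁ ∈ F', ∀ b₂ ∈ F', b₁ ≠ b₂ → Disjoint (S b₁) (S b₂)) →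
      ∑ b ∈ F', (S b).ncard = (⋃ b ∈ F', S b).ncard := by
    intro F'
    induction F' using Finset.induction_on with
    | empty => simp
    | @insert a F' ha ih =>
      intro hsub' hdisj'
      rw [Finset.sum_insert ha, Finset.set_biUnion_insert]
      have hdj : Disjoint (S a) (⋃ b ∈ F', S b) := by
        refine Set.disjoint_iff_forall_ne.2 ?_
        intro p hp q hq hpq
        simp only [Set.mem_iUnion] at hq
        obtain ⟨b, hb, hqb⟩ := hq
        have hne : a ≠ b := fun h => ha (h ▸ hb)
        exact Set.disjoint_iff_forall_ne.1
          (hdisj' a (Finset.mem_insert_self a F') b (Finset.mem_insert_of_mem hb) hne) hp hqb hpq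
      rw [Set.ncard_union_eq hdj (hP.subset (hsub' a (Finset.mem_insert_self a F')))
        (hP.subset (Set.iUnion₂_subset fun b hb => hsub' b (Finset.mem_insert_of_mem hb)))]
      rw [ih (fun b hb => hsub' b (Finset.mem_insert_of_mem hb))
        (fun b₁ h₁ b₂ h₂ h12 => hdisj' b₁ (Finset.mem_insert_of_mem h₁)
          b₂ (Finset.mem_insert_of_mem h₂) h12)]
  rw [key F hsub hdisj]
  exact Set.ncard_le_ncard (Set.iUnion₂_subset hsub) hP


/-- **Existence of `(δ,q)`-subsets (Lemma 2.3).** For every `n` there is a constant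
`C = C(n) ≥ 1` such that: for all `δ, q > 0` and every set `Q ⊆ ℝⁿ` with
`H^q_∞(Q) = β > 0`, there is a finite `δ`-separated set `P ⊆ Q` with
`#(P ∩ B(x,r)) ≤ C·(r/δ)^q` for all `x` and `r > δ`, and `#P ≥ C⁻¹·β·δ^{−q}`. -/
theorem exists_delta_q_subset (n : ℕ) :
    ∃ C : ℝ, 1 ≤ C ∧
      ∀ (δ q β : ℝ), 0 < δ → 0 < q → 0 < β →
        ∀ Q : Set (EuclideanSpace ℝ (Fin n)),
          hausdorffContent q Q = ENNReal.ofReal β →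
          ∃ P : Set (EuclideanSpace ℝ (Fin n)), P ⊆ Q ∧ P.Finite ∧
            (∀ x ∈ P, ∀ y ∈ P, x ≠ y → δ ≤ dist x y) ∧
            (∀ (x : EuclideanSpace ℝ (Fin n)) (r : ℝ), δ < r →
              ((P ∩ Metric.ball x r).ncard : ℝ) ≤ C * (r / δ) ^ q) ∧
            C⁻¹ * β * δ ^ (-q) ≤ (P.ncard : ℝ) := by
  classical
  have h16 : (1:ℝ) ≤ 16 ^ n := one_le_pow₀ (by norm_num)
  refine ⟨2 * 16 ^ n, by linarith, ?_⟩
  intro δ q β hδ hq hβ Q hQ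
  set C : ℝ := 2 * 16 ^ n with hC
  have hC1 : (1:ℝ) ≤ C := by rw [hC]; linarith
  have hC0 : (0:ℝ) < C := lt_of_lt_of_le one_pos hC1
  -- Step 0 : q ≤ n
  have hqn : q ≤ (n : ℝ) := by
    by_contra hqn'
    push_neg at hqn'
    have hd1 : dimH Q ≤ (n : ℝ≥0∞) := by
      refine (dimH_mono (subset_univ Q)).trans_eq ?_
      rw [Real.dimH_univ_eq_finrank (EuclideanSpace ℝ (Fin n)), finrank_euclideanSpace_fin]
    have hd0 : dimH Q < (q.toNNReal : ℝ≥0∞) := by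
      refine lt_of_le_of_lt hd1 ?_
      rw [show ((n:ℝ≥0∞)) = ((n : ℝ≥0) : ℝ≥0∞) by simp, ENNReal.coe_lt_coe,
        ← NNReal.coe_lt_coe, Real.coe_toNNReal q hq.le]
      simpa using hqn'
    have h0 : μH[q.toNNReal] Q = 0 := hausdorffMeasure_of_dimH_lt hd0
    have hle := hausdorffContent_le_hausdorffMeasure
      (X := EuclideanSpace ℝ (Fin n)) hq Q
    rw [hQ] at hle
    rw [show ((q.toNNReal : ℝ)) = q from Real.coe_toNNReal q hq.le] at h0
    rw [h0] at hle
    exact absurd (le_antisymm hle zero_le) (ENNReal.ofReal_pos.2 hβ).ne'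
  have h8q : (8:ℝ) ^ q ≤ 16 ^ n := by
    calc (8:ℝ) ^ q ≤ 8 ^ (n:ℝ) := Real.rpow_le_rpow_of_exponent_le (by norm_num) hqn
    _ = 8 ^ n := by rw [Real.rpow_natCast]
    _ ≤ 16 ^ n := pow_le_pow_left₀ (by norm_num) (by norm_num) n
  -- Step 1: Zorn to get a maximal good set
  set S : Set (Set (EuclideanSpace ℝ (Fin n))) :=
    {P | P ⊆ Q ∧ (∀ x ∈ P, ∀ y ∈ P, x ≠ y → δ ≤ dist x y) ∧
      ∀ (x : EuclideanSpace ℝ (Fin n)) (r : ℝ), δ < r →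
        ∀ F : Finset (EuclideanSpace ℝ (Fin n)), ↑F ⊆ P ∩ ball x r →
          (F.card : ℝ) ≤ (r/δ) ^ q} with hS
  obtain ⟨P, hPmax⟩ : ∃ P, Maximal (· ∈ S) P := by
    refine zorn_subset S fun c hcS hchain => ⟨⋃₀ c, ?_, fun s hs => subset_sUnion_of_mem hs⟩
    refine ⟨sUnion_subset fun s hs => (hcS hs).1, ?_, ?_⟩
    · rintro x ⟨s, hs, hxs⟩ y ⟨t, ht, hyt⟩ hxy
      rcases hchain.total hs ht with h | h
      · exact (hcS ht).2.1 x (h hxs) y hyt hxy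
      · exact (hcS hs).2.1 x hxs y (h hyt) hxy
    · intro x r hr F hF
      rcases F.eq_empty_or_nonempty with rfl | hFne
      · simpa using Real.rpow_nonneg (div_nonneg (le_of_lt (hδ.trans hr)) hδ.le) q
      · have hcne : c.Nonempty := by
          obtain ⟨a, ha⟩ := hFne
          obtain ⟨s, hs, -⟩ := (hF ha).1
          exact ⟨s, hs⟩
        have hsub : (↑F : Set _) ⊆ ⋃ s ∈ c, s := by
          intro a ha
          obtain ⟨s, hs, has⟩ := (hF ha).1
          exact mem_biUnion hs has
        obtain ⟨s, hs, hFs⟩ := (hchain.directedOn).exists_mem_subset_of_finset_subset_biUnion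
          hcne hsub
        exact (hcS hs).2.2 x r hr F (subset_inter hFs fun a ha => (hF ha).2)
  have hPQ : P ⊆ Q := hPmax.1.1
  have hPsep : ∀ x ∈ P, ∀ y ∈ P, x ≠ y → δ ≤ dist x y := hPmax.1.2.1
  have hPcnt := hPmax.1.2.2
  -- counting bound for finite subsets of P
  have count_bound : ∀ P' ⊆ P, P'.Finite →
      ∀ (x : EuclideanSpace ℝ (Fin n)) (r : ℝ), δ < r →
        ((P' ∩ ball x r).ncard : ℝ) ≤ (r/δ) ^ q := by
    intro P' hP' hfin x r hr
    have hfin2 : (P' ∩ ball x r).Finite := hfin.inter_of_left _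
    have hsub : ↑hfin2.toFinset ⊆ P ∩ ball x r := by
      rw [hfin2.coe_toFinset]
      exact inter_subset_inter_left _ hP'
    have := hPcnt x r hr hfin2.toFinset hsub
    rwa [ncard_eq_toFinset_card _ hfin2]
  by_cases hPfin : P.Finite
  swap
  · -- P infinite : pick any big finite subset
    obtain ⟨P', hP'sub, hP'fin, hP'card⟩ :=
      Set.Infinite.exists_subset_ncard_eq hPfin ⌈β * δ ^ (-q)⌉₊
    refine ⟨P', hP'sub.trans hPQ, hP'fin,
      fun x hx y hy hxy => hPsep x (hP'sub hx) y (hP'sub hy) hxy,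
      fun x r hr => (count_bound P' hP'sub hP'fin x r hr).trans
        (le_mul_of_one_le_left (Real.rpow_nonneg
          (div_nonneg (le_of_lt (hδ.trans hr)) hδ.le) q) hC1), ?_⟩
    rw [hP'card]
    have h1 : β * δ ^ (-q) ≤ (⌈β * δ ^ (-q)⌉₊ : ℝ) := Nat.le_ceil _
    have h2 : (0:ℝ) < β * δ ^ (-q) := mul_pos hβ (Real.rpow_pos_of_pos hδ _)
    have h3 : C⁻¹ ≤ 1 := inv_le_one_of_one_le₀ hC1
    calc C⁻¹ * β * δ ^ (-q) = C⁻¹ * (β * δ ^ (-q)) := by ring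
    _ ≤ 1 * (β * δ ^ (-q)) := mul_le_mul_of_nonneg_right h3 h2.le
    _ ≤ (⌈β * δ ^ (-q)⌉₊ : ℝ) := by linarith
  -- Main case : P finite
  set N := P.ncard with hN
  refine ⟨P, hPQ, hPfin, hPsep,
    fun x r hr => (count_bound P subset_rfl hPfin x r hr).trans
      (le_mul_of_one_le_left (Real.rpow_nonneg
        (div_nonneg (le_of_lt (hδ.trans hr)) hδ.le) q) hC1), ?_⟩
  -- every point of Q lies in a ball carrying many points of P
  have hQfin : ∀ z ∈ Q, ∃ (x : EuclideanSpace ℝ (Fin n)) (r : ℝ), δ ≤ r ∧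
      z ∈ closedBall x r ∧
      (1/2) * (r/δ) ^ q ≤ ((P ∩ closedBall x r).ncard : ℝ) := by
    intro z hz
    by_cases hzP : z ∈ P
    · refine ⟨z, δ, le_refl δ, mem_closedBall_self hδ.le, ?_⟩
      have h1 : 1 ≤ ((P ∩ closedBall z δ).ncard : ℝ) := by
        have := (Set.ncard_pos (hPfin.inter_of_left _)).2
          ⟨z, hzP, mem_closedBall_self hδ.le⟩
        exact_mod_cast this
      rw [div_self hδ.ne', Real.one_rpow]
      linarith
    · have hins : insert z P ∉ S := by
        intro hmem
        exact hzP (hPmax.2 hmem (subset_insert z P) (mem_insert z P))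
      by_cases hsep : ∀ x ∈ insert z P, ∀ y ∈ insert z P, x ≠ y → δ ≤ dist x y
      · -- counting fails for insert z P
        have hcnt : ¬ ∀ (x : EuclideanSpace ℝ (Fin n)) (r : ℝ), δ < r →
            ∀ F : Finset (EuclideanSpace ℝ (Fin n)), ↑F ⊆ insert z P ∩ ball x r →
              (F.card : ℝ) ≤ (r/δ) ^ q :=
          fun h => hins ⟨insert_subset hz hPQ, hsep, h⟩
        push_neg at hcnt
        obtain ⟨x, r, hr, F, hF, hcard⟩ := hcnt
        have ht1 : 1 < (r/δ) ^ q := by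
          have h1 : 1 < r / δ := (one_lt_div hδ).2 hr
          exact (Real.one_lt_rpow_iff_of_pos (by linarith)).2 (Or.inl ⟨h1, hq⟩)
        have hzF : z ∈ F := by
          by_contra hzF
          refine absurd (hPcnt x r hr F ?_) (not_le.2 hcard)
          intro a ha
          obtain ⟨h1, h2⟩ := hF ha
          rcases mem_insert_iff.1 h1 with rfl | h1
          · exact absurd ha hzF
          · exact ⟨h1, h2⟩
        have hFsub : ↑(F.erase z) ⊆ P ∩ closedBall x r := by
          intro a ha
          obtain ⟨hane, haF⟩ := Finset.mem_erase.1 (by exact_mod_cast ha)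
          obtain ⟨h1, h2⟩ := hF haF
          rcases mem_insert_iff.1 h1 with rfl | h1
          · exact absurd rfl hane
          · exact ⟨h1, ball_subset_closedBall h2⟩
        have hm : ((F.erase z).card : ℝ) ≤ ((P ∩ closedBall x r).ncard : ℝ) := by
          have h1 := Set.ncard_le_ncard hFsub (hPfin.inter_of_left _)
          rw [Set.ncard_coe_finset] at h1
          exact_mod_cast h1
        have hFcard2 : 2 ≤ F.card := by
          have h1 : (1:ℝ) < (F.card : ℝ) := lt_trans ht1 hcard
          exact_mod_cast Nat.one_lt_cast.mp h1
        have herase : ((F.erase z).card : ℝ) = (F.card : ℝ) - 1 := by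
          rw [Finset.card_erase_of_mem hzF]
          rw [Nat.cast_sub (by omega)]
          norm_num
        refine ⟨x, r, hr.le, ball_subset_closedBall (hF (by exact_mod_cast hzF)).2, ?_⟩
        rw [herase] at hm
        have hc2 : (2:ℝ) ≤ (F.card : ℝ) := by exact_mod_cast hFcard2
        rcases le_or_gt ((r/δ) ^ q) 2 with h | h
        · linarith
        · linarith
      · -- separation fails
        push_neg at hsep
        obtain ⟨a, ha, b, hb, hab, hdab⟩ := hsep
        obtain ⟨p, hp, hzp⟩ : ∃ p ∈ P, dist z p < δ := by
          rcases mem_insert_iff.1 ha with rfl | haP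
          · rcases mem_insert_iff.1 hb with rfl | hbP
            · exact absurd rfl hab
            · exact ⟨b, hbP, hdab⟩
          · rcases mem_insert_iff.1 hb with rfl | hbP
            · exact ⟨a, haP, by rwa [dist_comm]⟩
            · exact absurd hdab (not_lt.2 (hPsep a haP b hbP hab))
        refine ⟨p, δ, le_refl δ, mem_closedBall.2 hzp.le, ?_⟩
        have h1 : 1 ≤ ((P ∩ closedBall p δ).ncard : ℝ) := by
          have := (Set.ncard_pos (hPfin.inter_of_left _)).2
            ⟨p, hp, mem_closedBall_self hδ.le⟩
          exact_mod_cast this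
        rw [div_self hδ.ne', Real.one_rpow]
        linarith
  choose! xF rF hrδ hzB hcnt2 using hQfin
  -- uniform bound on the radii
  have hmN : ∀ z ∈ Q, ((P ∩ closedBall (xF z) (rF z)).ncard : ℝ) ≤ (N:ℝ) := by
    intro z hz
    exact_mod_cast Set.ncard_le_ncard inter_subset_left hPfin
  have hrR : ∀ z ∈ Q, rF z ≤ δ * (2*(N:ℝ)+1) ^ (1/q) := by
    intro z hz
    have h1 := hcnt2 z hz
    have h2 := hmN z hz
    have ha0 : (0:ℝ) < rF z / δ := div_pos (lt_of_lt_of_le hδ (hrδ z hz)) hδ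
    have h3 : (rF z / δ) ^ q ≤ 2*(N:ℝ)+1 := by linarith
    have h4 : ((rF z / δ) ^ q) ^ (1/q) ≤ (2*(N:ℝ)+1) ^ (1/q) :=
      Real.rpow_le_rpow (Real.rpow_nonneg ha0.le q) h3 (by positivity)
    rw [← Real.rpow_mul ha0.le, mul_one_div, div_self hq.ne', Real.rpow_one] at h4
    calc rF z = δ * (rF z / δ) := by field_simp
    _ ≤ δ * (2*(N:ℝ)+1) ^ (1/q) := by
        exact mul_le_mul_of_nonneg_left h4 hδ.le
  -- Vitali covering
  obtain ⟨u, -, hdisj, hcov⟩ :=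
    Vitali.exists_disjoint_subfamily_covering_enlargement_closedBall
      (univ : Set ↥Q) (fun z => xF ↑z) (fun z => rF ↑z) (δ * (2*(N:ℝ)+1) ^ (1/q))
      (fun z _ => hrR ↑z z.2) 4 (by norm_num)
  have hne2 : ∀ z : ↥Q, (P ∩ closedBall (xF ↑z) (rF ↑z)).Nonempty := by
    intro z
    have h1 := hcnt2 ↑z z.2
    have hpos : (0:ℝ) < ((P ∩ closedBall (xF ↑z) (rF ↑z)).ncard : ℝ) := by
      have : (0:ℝ) < (1/2) * (rF ↑z/δ) ^ q := by
        have : (0:ℝ) < rF ↑z / δ := div_pos (lt_of_lt_of_le hδ (hrδ ↑z z.2)) hδ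
        positivity
      linarith
    exact Set.nonempty_of_ncard_ne_zero (by exact_mod_cast hpos.ne')
  set g : ↥Q → EuclideanSpace ℝ (Fin n) := fun z => (hne2 z).choose with hg_def
  have hg : ∀ z : ↥Q, g z ∈ P ∩ closedBall (xF ↑z) (rF ↑z) := fun z => (hne2 z).choose_spec
  have hufin : u.Finite := by
    have hinj : Set.InjOn g u := by
      intro b1 h1 b2 h2 heq
      by_contra hne'
      exact (Set.disjoint_left.1 (hdisj h1 h2 hne')) (hg b1).2 (heq ▸ (hg b2).2)
    exact Set.Finite.of_finite_image
      (hPfin.subset (by rintro _ ⟨w, hw, rfl⟩; exact (hg w).1)) hinj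
  set F := hufin.toFinset with hF_def
  have hQcov : Q ⊆ ⋃ b ∈ F, closedBall (xF ↑b) (4 * rF ↑b) := by
    intro z hz
    obtain ⟨b, hb, hsub⟩ := hcov ⟨z, hz⟩ (mem_univ _)
    exact mem_biUnion (hufin.mem_toFinset.2 hb) (hsub (hzB z hz))
  have hcontent := hausdorffContent_le_sum F
    (fun b => closedBall (xF ↑b) (4 * rF ↑b)) hq hQcov
  have hsum1 : ∑ b ∈ F, EMetric.diam (closedBall (xF ↑b) (4 * rF ↑b)) ^ q
      ≤ ∑ b ∈ F, ENNReal.ofReal ((8 * rF ↑b) ^ q) := by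
    refine Finset.sum_le_sum fun b _ => ?_
    have hrb : (0:ℝ) < rF ↑b := lt_of_lt_of_le hδ (hrδ ↑b b.2)
    refine le_trans (ENNReal.rpow_le_rpow (ediam_closedBall_le _ _) hq.le) ?_
    rw [show 2*(4*rF ↑b) = 8 * rF ↑b by ring,
      ENNReal.ofReal_rpow_of_pos (by positivity)]
  rw [← ENNReal.ofReal_sum_of_nonneg
    (fun b _ => Real.rpow_nonneg (by have := lt_of_lt_of_le hδ (hrδ (↑b) b.2); positivity) q)] at hsum1
  have hβS : β ≤ ∑ b ∈ F, (8 * rF ↑b) ^ q := by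
    have h1 : ENNReal.ofReal β ≤ ENNReal.ofReal (∑ b ∈ F, (8 * rF ↑b) ^ q) :=
      hQ ▸ hcontent.trans hsum1
    exact (ENNReal.ofReal_le_ofReal_iff
      (Finset.sum_nonneg fun b _ => Real.rpow_nonneg
        (by have := lt_of_lt_of_le hδ (hrδ (↑b) b.2); positivity) q)).1 h1
  have hterm : ∀ b ∈ F, (8 * rF ↑b) ^ q
      ≤ (8 ^ q * δ ^ q * 2) * ((P ∩ closedBall (xF ↑b) (rF ↑b)).ncard : ℝ) := by
    intro b _
    have hrb : (0:ℝ) < rF ↑b := lt_of_lt_of_le hδ (hrδ ↑b b.2)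
    have h1 : (8 * rF ↑b : ℝ) = (8 * δ) * (rF ↑b / δ) := by field_simp
    rw [h1, Real.mul_rpow (by positivity) (by positivity),
      Real.mul_rpow (by norm_num) hδ.le]
    have h2 := hcnt2 ↑b b.2
    have h3 : (rF ↑b / δ) ^ q ≤ 2 * ((P ∩ closedBall (xF ↑b) (rF ↑b)).ncard : ℝ) := by
      linarith
    calc (8:ℝ) ^ q * δ ^ q * (rF ↑b / δ) ^ q
        ≤ 8 ^ q * δ ^ q * (2 * ((P ∩ closedBall (xF ↑b) (rF ↑b)).ncard : ℝ)) := by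
          refine mul_le_mul_of_nonneg_left h3 ?_
          positivity
    _ = (8 ^ q * δ ^ q * 2) * ((P ∩ closedBall (xF ↑b) (rF ↑b)).ncard : ℝ) := by ring
  have hsumN : ∑ b ∈ F, ((P ∩ closedBall (xF ↑b) (rF ↑b)).ncard : ℝ) ≤ (N:ℝ) := by
    have h1 : ∑ b ∈ F, (P ∩ closedBall (xF ↑b) (rF ↑b)).ncard ≤ N := by
      refine sum_ncard_le_of_disjoint hPfin F
        (fun b => P ∩ closedBall (xF ↑b) (rF ↑b))
        (fun b _ => inter_subset_left) ?_
      intro b1 h1 b2 h2 h12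
      have hd := hdisj (hufin.mem_toFinset.1 h1) (hufin.mem_toFinset.1 h2) h12
      exact (hd.mono inter_subset_right inter_subset_right)
    calc ∑ b ∈ F, ((P ∩ closedBall (xF ↑b) (rF ↑b)).ncard : ℝ)
        = ((∑ b ∈ F, (P ∩ closedBall (xF ↑b) (rF ↑b)).ncard : ℕ) : ℝ) := by
          rw [Nat.cast_sum]
    _ ≤ (N:ℝ) := by exact_mod_cast h1
  have hβN : β ≤ (8 ^ q * δ ^ q * 2) * (N:ℝ) := by
    calc β ≤ ∑ b ∈ F, (8 * rF ↑b) ^ q := hβS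
    _ ≤ ∑ b ∈ F, (8 ^ q * δ ^ q * 2) * ((P ∩ closedBall (xF ↑b) (rF ↑b)).ncard : ℝ) :=
        Finset.sum_le_sum hterm
    _ = (8 ^ q * δ ^ q * 2) * ∑ b ∈ F, ((P ∩ closedBall (xF ↑b) (rF ↑b)).ncard : ℝ) := by
        rw [Finset.mul_sum]
    _ ≤ (8 ^ q * δ ^ q * 2) * (N:ℝ) := by
        refine mul_le_mul_of_nonneg_left hsumN ?_
        have := Real.rpow_nonneg (show (0:ℝ) ≤ 8 by norm_num) q
        have := Real.rpow_nonneg hδ.le q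
        positivity
  -- final arithmetic
  have hδq : (0:ℝ) < δ ^ q := Real.rpow_pos_of_pos hδ q
  have hδnq : δ ^ (-q) = (δ ^ q)⁻¹ := by
    rw [Real.rpow_neg hδ.le]
  have h8q' : (8:ℝ) ^ q * 2 ≤ C := by
    rw [hC]; nlinarith [Real.rpow_nonneg (show (0:ℝ) ≤ 8 by norm_num) q]
  have hkey : β * δ ^ (-q) ≤ C * (N:ℝ) := by
    rw [hδnq]
    have h1 : β * (δ ^ q)⁻¹ ≤ (8 ^ q * δ ^ q * 2 * (N:ℝ)) * (δ ^ q)⁻¹ :=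
      mul_le_mul_of_nonneg_right (by linarith [hβN]) (inv_nonneg.2 hδq.le)
    have h2 : (8 ^ q * δ ^ q * 2 * (N:ℝ)) * (δ ^ q)⁻¹ = (8 ^ q * 2) * (N:ℝ) := by
      field_simp
    rw [h2] at h1
    exact h1.trans (mul_le_mul_of_nonneg_right h8q' (Nat.cast_nonneg N))
  calc C⁻¹ * β * δ ^ (-q) = C⁻¹ * (β * δ ^ (-q)) := by ring
  _ ≤ C⁻¹ * (C * (N:ℝ)) := by
      refine mul_le_mul_of_nonneg_left hkey (by positivity)
  _ = (N:ℝ) := by field_simp
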